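/- If Θ and Λ are compatible quantum channels on L¹(ℂ^d) (margins of a single channel Φ : L¹(ℂ^d) → L¹(ℂ^d⊗ℂ^d)), then Tr[Θ] + Tr[Λ] ≤ d(d+1), where Tr denotes the trace of a channel viewed as a linear map on the d²-dimensional operator space. -/

import Mathlib

/-- Positive element of a star ring: a finite sum of elements of the form `star y * y`. -/
def IsPosElem {A : Type*} [Ring A] [Star A] (x : A) : Prop :=
  ∃ (n : ℕ) (y : Fin n → A), x = ∑ i, star (y i) * y i

/-- Complete positivity of a linear map between star algebras. -/
def IsCP {A B : Type*} [Ring A] [Star A] [Algebra ℂ A]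
    [Ring B] [Star B] [Algebra ℂ B] (φ : B →ₗ[ℂ] A) : Prop :=
  ∀ (n : ℕ) (b : Fin n → B) (a : Fin n → A),
    IsPosElem (∑ i, ∑ j, star (a i) * φ (star (b i) * b j) * a j)

/-- A quantum channel in the Schrödinger picture: a completely positive trace preserving
linear map on matrices. -/
def IsQChannel {d : ℕ} {m : Type*} [Fintype m] [DecidableEq m]
    (φ : Matrix (Fin d) (Fin d) ℂ →ₗ[ℂ] Matrix m m ℂ) : Prop :=
  IsCP φ ∧ ∀ a : Matrix (Fin d) (Fin d) ℂ, (φ a).trace = a.trace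

/-- Partial trace over the second factor. -/
noncomputable def ptr2 {d : ℕ} (M : Matrix (Fin d × Fin d) (Fin d × Fin d) ℂ) :
    Matrix (Fin d) (Fin d) ℂ :=
  Matrix.of fun i k => ∑ j, M (i, j) (k, j)

/-- Partial trace over the first factor. -/
noncomputable def ptr1 {d : ℕ} (M : Matrix (Fin d × Fin d) (Fin d × Fin d) ℂ) :
    Matrix (Fin d) (Fin d) ℂ :=
  Matrix.of fun j l => ∑ i, M (i, j) (i, l)

/-- Compatibility of two quantum channels on `L¹(ℂ^d)`: they are the two margins (partial
traces) of a single channel into `L¹(ℂ^d ⊗ ℂ^d)`. -/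
def QCompatible {d : ℕ}
    (Θ Λ : Matrix (Fin d) (Fin d) ℂ →ₗ[ℂ] Matrix (Fin d) (Fin d) ℂ) : Prop :=
  ∃ Φ : Matrix (Fin d) (Fin d) ℂ →ₗ[ℂ] Matrix (Fin d × Fin d) (Fin d × Fin d) ℂ,
    IsQChannel Φ ∧ (∀ a, Θ a = ptr2 (Φ a)) ∧ (∀ a, Λ a = ptr1 (Φ a))

open Matrix Finset

namespace QChanAux

lemma stdBasis_repr {d : ℕ} (M : Matrix (Fin d) (Fin d) ℂ) (p : Fin d × Fin d) :
    (Matrix.stdBasis ℂ (Fin d) (Fin d)).repr M p = M p.1 p.2 := by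
  have hM : M = ∑ q : Fin d × Fin d, M q.1 q.2 • Matrix.stdBasis ℂ (Fin d) (Fin d) q := by
    conv_lhs => rw [Matrix.matrix_eq_sum_single M]
    rw [← Finset.sum_product']
    refine Finset.sum_congr rfl fun q _ => ?_
    rw [Matrix.stdBasis_eq_single, Matrix.smul_single, smul_eq_mul, mul_one]
  conv_lhs => rw [hM]
  simp [Finsupp.single_apply]

lemma trace_formula {d : ℕ} (f : Matrix (Fin d) (Fin d) ℂ →ₗ[ℂ] Matrix (Fin d) (Fin d) ℂ) :
    LinearMap.trace ℂ _ f
      = ∑ p : Fin d × Fin d, (f (Matrix.single p.1 p.2 1)) p.1 p.2 := by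
  rw [LinearMap.trace_eq_matrix_trace ℂ (Matrix.stdBasis ℂ (Fin d) (Fin d)) f, Matrix.trace]
  refine Finset.sum_congr rfl fun p _ => ?_
  rw [Matrix.diag_apply, LinearMap.toMatrix_apply, stdBasis_repr,
    Matrix.stdBasis_eq_single]

lemma stdBasisMatrix_conjT {d : ℕ} (i j : Fin d) :
    (Matrix.single i j (1:ℂ))ᴴ = Matrix.single j i 1 := by
  ext a b
  simp only [Matrix.conjTranspose_apply, Matrix.single, Matrix.of_apply]
  split_ifs with h1 h2 h2 <;> simp_all

variable {d : ℕ}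

def xv (k : Fin d) : (Fin d × Fin d) × Fin d → ℂ := fun b => if b.1.1 = b.2 ∧ b.1.2 = k then 1 else 0
def yv (k : Fin d) : (Fin d × Fin d) × Fin d → ℂ := fun b => if b.1.1 = k ∧ b.1.2 = b.2 then 1 else 0
noncomputable def As (d : ℕ) : Matrix ((Fin d × Fin d) × Fin d) (Fin d) ℂ := Matrix.of fun b k => xv k b + yv k b
noncomputable def At (d : ℕ) : Matrix ((Fin d × Fin d) × Fin d) (Fin d) ℂ := Matrix.of fun b k => xv k b - yv k b

lemma conj_xv (k : Fin d) (b) : (starRingEnd ℂ) (xv k b) = xv k b := by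
  simp [xv, apply_ite (starRingEnd ℂ)]
lemma conj_yv (k : Fin d) (b) : (starRingEnd ℂ) (yv k b) = yv k b := by
  simp [yv, apply_ite (starRingEnd ℂ)]

lemma dot_xx (k l : Fin d) :
    ∑ b : (Fin d × Fin d) × Fin d, xv k b * xv l b = if k = l then (d : ℂ) else 0 := by
  simp only [xv, Fintype.sum_prod_type, ite_mul, one_mul, zero_mul]
  simp [Finset.sum_ite_eq, Finset.sum_ite_eq', ite_and]
  split_ifs <;> simp

lemma dot_yy (k l : Fin d) :
    ∑ b : (Fin d × Fin d) × Fin d, yv k b * yv l b = if k = l then (d : ℂ) else 0 := by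
  simp only [yv, Fintype.sum_prod_type, ite_mul, one_mul, zero_mul]
  simp [Finset.sum_ite_eq, Finset.sum_ite_eq', ite_and]

lemma dot_xy (k l : Fin d) :
    ∑ b : (Fin d × Fin d) × Fin d, xv k b * yv l b = if k = l then 1 else 0 := by
  simp only [xv, yv, Fintype.sum_prod_type, ite_mul, one_mul, zero_mul]
  simp [Finset.sum_ite_eq, Finset.sum_ite_eq', ite_and]

lemma dot_yx (k l : Fin d) :
    ∑ b : (Fin d × Fin d) × Fin d, yv k b * xv l b = if k = l then 1 else 0 := by
  rw [show (if k = l then (1:ℂ) else 0) = if l = k then 1 else 0 by simp [eq_comm], ← dot_xy l k]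
  exact Finset.sum_congr rfl fun b _ => mul_comm _ _

lemma gram_ss : (As d)ᴴ * As d = ((2 * d + 2 : ℂ)) • 1 := by
  ext k l
  rw [Matrix.mul_apply]
  simp only [Matrix.conjTranspose_apply, As, Matrix.of_apply, Matrix.smul_apply,
    Matrix.one_apply, RCLike.star_def, map_add, conj_xv, conj_yv, add_mul, mul_add]
  simp only [Finset.sum_add_distrib, Finset.sum_sub_distrib]
  rw [dot_xx, dot_xy, dot_yx, dot_yy]
  split_ifs <;> simp <;> ring

lemma gram_tt : (At d)ᴴ * At d = ((2 * d - 2 : ℂ)) • 1 := by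
  ext k l
  rw [Matrix.mul_apply]
  simp only [Matrix.conjTranspose_apply, At, Matrix.of_apply, Matrix.smul_apply,
    Matrix.one_apply, RCLike.star_def, map_sub, conj_xv, conj_yv, sub_mul, mul_sub]
  simp only [Finset.sum_add_distrib, Finset.sum_sub_distrib]
  rw [dot_xx, dot_xy, dot_yx, dot_yy]
  split_ifs <;> simp <;> ring

lemma gram_st : (As d)ᴴ * At d = 0 := by
  ext k l
  rw [Matrix.mul_apply]
  simp only [Matrix.conjTranspose_apply, As, At, Matrix.of_apply, Matrix.zero_apply,
    RCLike.star_def, map_add, conj_xv, conj_yv, add_mul, mul_sub]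
  simp only [Finset.sum_add_distrib, Finset.sum_sub_distrib]
  rw [dot_xx, dot_xy, dot_yx, dot_yy]
  split_ifs <;> ring

noncomputable def Sm (d : ℕ) : Matrix ((Fin d × Fin d) × Fin d) ((Fin d × Fin d) × Fin d) ℂ := As d * (As d)ᴴ
noncomputable def Tm (d : ℕ) : Matrix ((Fin d × Fin d) × Fin d) ((Fin d × Fin d) × Fin d) ℂ := At d * (At d)ᴴ

lemma Sm_mul_Sm : Sm d * Sm d = (2 * d + 2 : ℂ) • Sm d := by
  rw [Sm, Matrix.mul_assoc, ← Matrix.mul_assoc (As d)ᴴ, gram_ss, Matrix.smul_mul,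
    Matrix.one_mul, Matrix.mul_smul]

lemma Tm_mul_Tm : Tm d * Tm d = (2 * d - 2 : ℂ) • Tm d := by
  rw [Tm, Matrix.mul_assoc, ← Matrix.mul_assoc (At d)ᴴ, gram_tt, Matrix.smul_mul,
    Matrix.one_mul, Matrix.mul_smul]

lemma Sm_mul_Tm : Sm d * Tm d = 0 := by
  rw [Sm, Tm, Matrix.mul_assoc, ← Matrix.mul_assoc (As d)ᴴ, gram_st, Matrix.zero_mul,
    Matrix.mul_zero]

lemma Tm_mul_Sm : Tm d * Sm d = 0 := by
  have h : (At d)ᴴ * As d = 0 := by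
    have := congrArg Matrix.conjTranspose (gram_st (d := d))
    simpa [Matrix.conjTranspose_mul] using this
  rw [Tm, Sm, Matrix.mul_assoc, ← Matrix.mul_assoc (At d)ᴴ, h, Matrix.zero_mul,
    Matrix.mul_zero]

lemma Sm_herm : (Sm d)ᴴ = Sm d := by
  rw [Sm, Matrix.conjTranspose_mul, Matrix.conjTranspose_conjTranspose]

lemma Tm_herm : (Tm d)ᴴ = Tm d := by
  rw [Tm, Matrix.conjTranspose_mul, Matrix.conjTranspose_conjTranspose]

/-- `Mm` is the square root of `(d+1)•1 - (1/2)•Sm - (1/2)•Tm`. -/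
noncomputable def Mm (d : ℕ) : Matrix ((Fin d × Fin d) × Fin d) ((Fin d × Fin d) × Fin d) ℂ :=
  ((Real.sqrt (d+1) : ℝ) : ℂ) • 1
    + (-((Real.sqrt (d+1) : ℝ) : ℂ) / (2*(d+1))) • Sm d
    + ((((Real.sqrt 2 : ℝ) : ℂ) - ((Real.sqrt (d+1) : ℝ) : ℂ)) / (2*(d-1))) • Tm d

lemma Mm_herm : (Mm d)ᴴ = Mm d := by
  rw [Mm]
  simp [Matrix.conjTranspose_add, Matrix.conjTranspose_smul, Sm_herm, Tm_herm,
    Complex.conj_ofReal, map_div₀, map_sub, map_neg, _root_.map_mul, map_add, map_ofNat]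

lemma master (hd2 : 2 ≤ d) :
    Mm d * Mm d = ((d : ℂ) + 1) • 1 - (1/2 : ℂ) • Sm d - (1/2 : ℂ) • Tm d := by
  have haa : ((Real.sqrt (d+1) : ℝ) : ℂ) * ((Real.sqrt (d+1) : ℝ) : ℂ) = (d : ℂ) + 1 := by
    rw [← Complex.ofReal_mul, Real.mul_self_sqrt (by positivity)]
    push_cast; ring
  have hbb : ((Real.sqrt 2 : ℝ) : ℂ) * ((Real.sqrt 2 : ℝ) : ℂ) = 2 := by
    rw [← Complex.ofReal_mul, Real.mul_self_sqrt (by norm_num)]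
    norm_num
  have hd1 : ((d : ℂ) + 1) ≠ 0 := by
    have : ((d + 1 : ℕ) : ℂ) ≠ 0 := Nat.cast_ne_zero.mpr (Nat.succ_ne_zero d)
    push_cast at this
    exact this
  have hdm1 : ((d : ℂ) - 1) ≠ 0 := by
    refine sub_ne_zero.mpr ?_
    exact_mod_cast (by omega : d ≠ 1)
  rw [Mm]
  simp only [Matrix.add_mul, Matrix.mul_add, Matrix.smul_mul, Matrix.mul_smul,
    Matrix.one_mul, Matrix.mul_one, smul_smul, Sm_mul_Sm, Tm_mul_Tm, Sm_mul_Tm, Tm_mul_Sm,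
    smul_zero, add_zero, smul_add]
  match_scalars
  · linear_combination haa
  · field_simp
    linear_combination (-1) * haa
  · field_simp
    linear_combination hbb - haa

noncomputable def Qf (Φ : Matrix (Fin d) (Fin d) ℂ →ₗ[ℂ] Matrix (Fin d × Fin d) (Fin d × Fin d) ℂ)
    (v : (Fin d × Fin d) × Fin d → ℂ) : ℂ :=
  ∑ i : Fin d, ∑ j : Fin d, ∑ p : Fin d × Fin d, ∑ q : Fin d × Fin d,
    (starRingEnd ℂ) (v (p, i)) * (Φ (Matrix.single i j 1)) p q * v (q, j)

noncomputable def TrJ (Φ : Matrix (Fin d) (Fin d) ℂ →ₗ[ℂ] Matrix (Fin d × Fin d) (Fin d × Fin d) ℂ)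
    (K : Matrix ((Fin d × Fin d) × Fin d) ((Fin d × Fin d) × Fin d) ℂ) : ℂ :=
  ∑ i : Fin d, ∑ j : Fin d, ∑ p : Fin d × Fin d, ∑ q : Fin d × Fin d,
    (Φ (Matrix.single i j 1)) p q * K (q, j) (p, i)

variable {Φ : Matrix (Fin d) (Fin d) ℂ →ₗ[ℂ] Matrix (Fin d × Fin d) (Fin d × Fin d) ℂ}

lemma TrJ_add (K L) : TrJ Φ (K + L) = TrJ Φ K + TrJ Φ L := by
  simp only [TrJ, Matrix.add_apply, mul_add, Finset.sum_add_distrib]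

lemma TrJ_smul (r : ℂ) (K) : TrJ Φ (r • K) = r * TrJ Φ K := by
  simp only [TrJ, Matrix.smul_apply, smul_eq_mul, Finset.mul_sum]
  refine sum_congr rfl fun i _ => sum_congr rfl fun j _ => sum_congr rfl fun p _ =>
    sum_congr rfl fun q _ => by ring

lemma TrJ_sub (K L) : TrJ Φ (K - L) = TrJ Φ K - TrJ Φ L := by
  simp only [TrJ, Matrix.sub_apply, mul_sub, Finset.sum_sub_distrib]

lemma TrJ_one (hpt : ∀ a : Matrix (Fin d) (Fin d) ℂ, (Φ a).trace = a.trace) :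
    TrJ Φ 1 = (d : ℂ) := by
  have h1 : ∀ (q : Fin d × Fin d) (j : Fin d) (p : Fin d × Fin d) (i : Fin d),
      (1 : Matrix ((Fin d × Fin d) × Fin d) ((Fin d × Fin d) × Fin d) ℂ) (q, j) (p, i)
        = (if q = p then (1:ℂ) else 0) * (if j = i then 1 else 0) := by
    intro q j p i
    by_cases h : q = p <;> by_cases h2 : j = i <;> simp [Matrix.one_apply, Prod.ext_iff, h, h2]
  simp only [TrJ, h1]
  have h2 : ∀ i j : Fin d, ∑ p : Fin d × Fin d, ∑ q : Fin d × Fin d,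
      (Φ (Matrix.single i j 1)) p q * ((if q = p then (1:ℂ) else 0) * (if j = i then 1 else 0))
      = (if j = i then 1 else 0) * (Φ (Matrix.single i j 1)).trace := by
    intro i j
    rw [Matrix.trace, Finset.mul_sum]
    refine sum_congr rfl fun p _ => ?_
    rw [Finset.sum_eq_single p (fun q _ hq => by simp [hq]) (by simp)]
    simp [Matrix.diag]
  simp only [h2]
  have h3 : ∀ i : Fin d, (Φ (Matrix.single i i (1:ℂ))).trace = 1 := by
    intro i
    rw [hpt]
    simp [Matrix.trace, Matrix.diag, Matrix.single, Matrix.of_apply]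
  calc ∑ i : Fin d, ∑ j : Fin d, (if j = i then (1:ℂ) else 0) * (Φ (Matrix.single i j 1)).trace
      = ∑ i : Fin d, (Φ (Matrix.single i i (1:ℂ))).trace := by
        refine sum_congr rfl fun i _ => ?_
        rw [Finset.sum_eq_single i (fun j _ hj => by simp [hj]) (by simp)]
        simp
    _ = (d : ℂ) := (Finset.sum_congr rfl fun i _ => h3 i).trans (by simp)

section pulls
variable {M : Type*} [AddCommMonoid M]
variable {i1 i2 i3 i4 i5 : Type*} [Fintype i1] [Fintype i2] [Fintype i3] [Fintype i4] [Fintype i5]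

lemma sum_pull2 (f : i1 → i5 → M) : ∑ a, ∑ k, f a k = ∑ k, ∑ a, f a k := Finset.sum_comm

lemma sum_pull3 (f : i1 → i2 → i5 → M) :
    ∑ a, ∑ b, ∑ k, f a b k = ∑ k, ∑ a, ∑ b, f a b k :=
  (Finset.sum_congr rfl fun a _ => sum_pull2 (f a)).trans (sum_pull2 _)

lemma sum_pull4 (f : i1 → i2 → i3 → i5 → M) :
    ∑ a, ∑ b, ∑ c, ∑ k, f a b c k = ∑ k, ∑ a, ∑ b, ∑ c, f a b c k :=
  (Finset.sum_congr rfl fun a _ => sum_pull3 (f a)).trans (sum_pull2 _)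

lemma sum_pull5 (f : i1 → i2 → i3 → i4 → i5 → M) :
    ∑ a, ∑ b, ∑ c, ∑ e, ∑ k, f a b c e k = ∑ k, ∑ a, ∑ b, ∑ c, ∑ e, f a b c e k :=
  (Finset.sum_congr rfl fun a _ => sum_pull4 (f a)).trans (sum_pull2 _)

end pulls

lemma TrJ_outer {n : Type*} [Fintype n] (A : Matrix ((Fin d × Fin d) × Fin d) n ℂ) :
    TrJ Φ (A * Aᴴ) = ∑ k : n, Qf Φ (fun b => A b k) := by
  simp only [TrJ, Qf, Matrix.mul_apply, Matrix.conjTranspose_apply, Finset.mul_sum]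
  rw [sum_pull5]
  refine sum_congr rfl fun k _ => sum_congr rfl fun i _ => sum_congr rfl fun j _ =>
    sum_congr rfl fun p _ => sum_congr rfl fun q _ => ?_
  simp only [RCLike.star_def]
  ring

lemma Qf_par (v w : (Fin d × Fin d) × Fin d → ℂ) :
    Qf Φ (fun b => v b + w b) + Qf Φ (fun b => v b - w b) = 2 * Qf Φ v + 2 * Qf Φ w := by
  simp only [Qf, ← Finset.sum_add_distrib, Finset.mul_sum]
  refine sum_congr rfl fun i _ => sum_congr rfl fun j _ => sum_congr rfl fun p _ =>
    sum_congr rfl fun q _ => ?_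
  simp only [map_add, map_sub]
  ring


lemma Qf_nonneg (hd : 0 < d)
    (hΦ : IsCP Φ) (v : (Fin d × Fin d) × Fin d → ℂ) :
    0 ≤ (Qf Φ v).re ∧ (Qf Φ v).im = 0 := by
  classical
  set z : Fin d := ⟨0, hd⟩
  set q0 : Fin d × Fin d := (z, z) with hq0
  set b : Fin d → Matrix (Fin d) (Fin d) ℂ := fun i => Matrix.single z i 1 with hb
  set a : Fin d → Matrix (Fin d × Fin d) (Fin d × Fin d) ℂ :=
    fun j => Matrix.of fun p q => if q = q0 then v (p, j) else 0 with ha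
  obtain ⟨n, y, hy⟩ := hΦ d b a
  have hbb : ∀ i j : Fin d, star (b i) * b j = Matrix.single i j (1:ℂ) := by
    intro i j
    rw [hb, Matrix.star_eq_conjTranspose, stdBasisMatrix_conjT]
    simpa using Matrix.single_mul_single_same (c := (1:ℂ)) i z j 1
  have key : Qf Φ v = (∑ i, ∑ j, star (a i) * Φ (star (b i) * b j) * a j) q0 q0 := by
    simp only [Matrix.sum_apply]
    refine Finset.sum_congr rfl fun i _ => Finset.sum_congr rfl fun j _ => ?_
    rw [hbb]
    rw [Matrix.mul_apply]
    simp only [Matrix.mul_apply]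
    rw [Finset.sum_comm]
    refine Finset.sum_congr rfl fun p _ => ?_
    rw [Finset.sum_mul]
    refine Finset.sum_congr rfl fun q _ => ?_
    simp [ha, Matrix.star_eq_conjTranspose, Matrix.conjTranspose_apply]
  have key2 : Qf Φ v = ∑ m, ∑ p : Fin d × Fin d,
      ((Complex.normSq (y m p q0) : ℝ) : ℂ) := by
    rw [key, hy, Matrix.sum_apply]
    refine Finset.sum_congr rfl fun m _ => ?_
    rw [Matrix.mul_apply]
    refine Finset.sum_congr rfl fun p _ => ?_
    rw [Matrix.star_eq_conjTranspose, Matrix.conjTranspose_apply,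
      Complex.normSq_eq_conj_mul_self]
    rfl
  constructor
  · rw [key2]
    simp only [Complex.re_sum]
    refine Finset.sum_nonneg fun m _ => Finset.sum_nonneg fun p _ => ?_
    simp [Complex.normSq_nonneg]
  · rw [key2]
    simp only [Complex.im_sum]
    simp

lemma Qf_xv (k : Fin d) : Qf Φ (xv k)
    = ∑ i : Fin d, ∑ j : Fin d, (Φ (Matrix.single i j 1)) (i, k) (j, k) := by
  rw [Qf]
  refine sum_congr rfl fun i _ => sum_congr rfl fun j _ => ?_
  have hx : ∀ (p : Fin d × Fin d) (i' : Fin d), xv k (p, i') = if p = (i', k) then 1 else 0 := by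
    intro p i'
    simp [xv, Prod.ext_iff]
  simp only [conj_xv, hx]
  rw [Finset.sum_eq_single (i, k) (fun p _ hp => by simp [hp]) (by simp)]
  rw [Finset.sum_eq_single (j, k) (fun q _ hq => by simp [hq]) (by simp)]
  simp

lemma Qf_yv (k : Fin d) : Qf Φ (yv k)
    = ∑ i : Fin d, ∑ j : Fin d, (Φ (Matrix.single i j 1)) (k, i) (k, j) := by
  rw [Qf]
  refine sum_congr rfl fun i _ => sum_congr rfl fun j _ => ?_
  have hy : ∀ (p : Fin d × Fin d) (i' : Fin d), yv k (p, i') = if p = (k, i') then 1 else 0 := by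
    intro p i'
    simp [yv, Prod.ext_iff]
  simp only [conj_yv, hy]
  rw [Finset.sum_eq_single (k, i) (fun p _ hp => by simp [hp]) (by simp)]
  rw [Finset.sum_eq_single (k, j) (fun q _ hq => by simp [hq]) (by simp)]
  simp

lemma trTheta (Θ : Matrix (Fin d) (Fin d) ℂ →ₗ[ℂ] Matrix (Fin d) (Fin d) ℂ)
    (hmar : ∀ a, Θ a = ptr2 (Φ a)) :
    LinearMap.trace ℂ _ Θ = ∑ k : Fin d, Qf Φ (xv k) := by
  rw [trace_formula]
  calc ∑ p : Fin d × Fin d, (Θ (Matrix.single p.1 p.2 1)) p.1 p.2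
      = ∑ i : Fin d, ∑ j : Fin d, ∑ k : Fin d,
          (Φ (Matrix.single i j 1)) (i, k) (j, k) := by
        rw [Fintype.sum_prod_type]
        refine sum_congr rfl fun i _ => sum_congr rfl fun j _ => ?_
        rw [hmar]
        rfl
    _ = ∑ k : Fin d, Qf Φ (xv k) := by
        rw [sum_pull3]
        exact Finset.sum_congr rfl fun k _ => (Qf_xv k).symm

lemma trLambda (Λ : Matrix (Fin d) (Fin d) ℂ →ₗ[ℂ] Matrix (Fin d) (Fin d) ℂ)
    (hmar : ∀ a, Λ a = ptr1 (Φ a)) :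
    LinearMap.trace ℂ _ Λ = ∑ k : Fin d, Qf Φ (yv k) := by
  rw [trace_formula]
  calc ∑ p : Fin d × Fin d, (Λ (Matrix.single p.1 p.2 1)) p.1 p.2
      = ∑ i : Fin d, ∑ j : Fin d, ∑ k : Fin d,
          (Φ (Matrix.single i j 1)) (k, i) (k, j) := by
        rw [Fintype.sum_prod_type]
        refine sum_congr rfl fun i _ => sum_congr rfl fun j _ => ?_
        rw [hmar]
        rfl
    _ = ∑ k : Fin d, Qf Φ (yv k) := by
        rw [sum_pull3]
        exact Finset.sum_congr rfl fun k _ => (Qf_yv k).symm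

end QChanAux

open QChanAux in
theorem trace_sum_le_of_compatible {d : ℕ} (hd : 0 < d)
    (Θ Λ : Matrix (Fin d) (Fin d) ℂ →ₗ[ℂ] Matrix (Fin d) (Fin d) ℂ)
    (hΘ : IsQChannel Θ) (hΛ : IsQChannel Λ)
    (hcomp : QCompatible Θ Λ) :
    (LinearMap.trace ℂ _ Θ + LinearMap.trace ℂ _ Λ).re ≤ (d : ℝ) * (d + 1) ∧
    (LinearMap.trace ℂ _ Θ + LinearMap.trace ℂ _ Λ).im = 0 := by
  obtain ⟨Φ, hΦ, hmarΘ, hmarΛ⟩ := hcomp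
  rcases eq_or_lt_of_le (Nat.one_le_iff_ne_zero.mpr hd.ne') with hd1 | hd2
  · -- d = 1
    have hd1' : d = 1 := hd1.symm
    subst hd1'
    have h0 : ∀ (f : Matrix (Fin 1) (Fin 1) ℂ →ₗ[ℂ] Matrix (Fin 1) (Fin 1) ℂ),
        (∀ a : Matrix (Fin 1) (Fin 1) ℂ, (f a).trace = a.trace) →
        LinearMap.trace ℂ _ f = 1 := by
      intro f hf
      rw [trace_formula]
      have : ∀ p : Fin 1 × Fin 1, p = (0, 0) := by intro p; ext <;> simp [Fin.eq_zero]
      rw [Finset.sum_eq_single (0,0) (fun p _ hp => absurd (this p) hp) (by simp)]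
      have ht := hf (Matrix.single 0 0 1)
      rw [Matrix.trace_fin_one, Matrix.trace_fin_one] at ht
      simpa using ht
    rw [h0 Θ hΘ.2, h0 Λ hΛ.2]
    norm_num
  · -- 2 ≤ d
    -- the key identity
    have hM : Mm d * Mm d = Mm d * (Mm d)ᴴ := by rw [Mm_herm]
    have hkey : ((d : ℂ) + 1) * TrJ Φ 1
        = TrJ Φ (Mm d * Mm d) + (1/2 : ℂ) * TrJ Φ (Sm d) + (1/2 : ℂ) * TrJ Φ (Tm d) := by
      have := master (d := d) hd2
      have h2 : ((d : ℂ) + 1) • (1 : Matrix ((Fin d × Fin d) × Fin d) ((Fin d × Fin d) × Fin d) ℂ)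
          = Mm d * Mm d + (1/2 : ℂ) • Sm d + (1/2 : ℂ) • Tm d := by
        rw [this]; abel
      have h3 := congrArg (TrJ Φ) h2
      rw [TrJ_smul, TrJ_add, TrJ_add, TrJ_smul, TrJ_smul] at h3
      exact h3
    have hTr1 : TrJ Φ 1 = (d : ℂ) := TrJ_one hΦ.2
    have hS : TrJ Φ (Sm d) = ∑ k : Fin d, Qf Φ (fun b => As d b k) := by
      rw [Sm]; exact TrJ_outer _
    have hT : TrJ Φ (Tm d) = ∑ k : Fin d, Qf Φ (fun b => At d b k) := by
      rw [Tm]; exact TrJ_outer _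
    have hP : TrJ Φ (Mm d * Mm d)
        = ∑ b : (Fin d × Fin d) × Fin d, Qf Φ (fun c => Mm d c b) := by
      rw [hM]; exact TrJ_outer _
    have hpar : ∀ k : Fin d, Qf Φ (fun b => As d b k) + Qf Φ (fun b => At d b k)
        = 2 * Qf Φ (xv k) + 2 * Qf Φ (yv k) := fun k => Qf_par (xv k) (yv k)
    have hsum : TrJ Φ (Sm d) + TrJ Φ (Tm d)
        = 2 * (LinearMap.trace ℂ _ Θ + LinearMap.trace ℂ _ Λ) := by
      rw [hS, hT, ← Finset.sum_add_distrib, trTheta Θ hmarΘ, trLambda Λ hmarΛ,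
        mul_add, Finset.mul_sum, Finset.mul_sum, ← Finset.sum_add_distrib]
      exact Finset.sum_congr rfl fun k _ => hpar k
    have hfinal : LinearMap.trace ℂ _ Θ + LinearMap.trace ℂ _ Λ
        = ((d : ℂ) + 1) * d - TrJ Φ (Mm d * Mm d) := by
      rw [hTr1] at hkey
      linear_combination (-(1/2 : ℂ)) * hsum - hkey
    have hPnn : 0 ≤ (TrJ Φ (Mm d * Mm d)).re ∧ (TrJ Φ (Mm d * Mm d)).im = 0 := by
      rw [hP]
      constructor
      · rw [Complex.re_sum]
        exact Finset.sum_nonneg fun b _ => (Qf_nonneg hd hΦ.1 _).1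
      · rw [Complex.im_sum]
        exact Finset.sum_eq_zero fun b _ => (Qf_nonneg hd hΦ.1 _).2
    have hC : ((d : ℂ) + 1) * d = (((((d : ℝ)) + 1) * d : ℝ) : ℂ) := by push_cast; ring
    rw [hfinal, hC]
    constructor
    · rw [Complex.sub_re, Complex.ofReal_re]
      nlinarith [hPnn.1]
    · rw [Complex.sub_im, Complex.ofReal_im, hPnn.2]
      ring
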